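/- If A is a P²-matrix, then A is invertible and A⁻¹ is a P²-matrix. -/
import Mathlib


open Matrix BigOperators

/-- The principal minor of `A` indexed by the finset `s`. -/
noncomputable def principalMinor {n : ℕ} (A : Matrix (Fin n) (Fin n) ℝ) (s : Finset (Fin n)) : ℝ :=
  (A.submatrix (fun i : {x // x ∈ s} => (i : Fin n)) (fun j : {x // x ∈ s} => (j : Fin n))).det

/-- `A` is a P-matrix: all principal minors are positive. -/
def IsPMatrix {n : ℕ} (A : Matrix (Fin n) (Fin n) ℝ) : Prop :=
  ∀ s : Finset (Fin n), s.Nonempty → 0 < principalMinor A s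

/-- `A` is a Q-matrix: for each `k` with `1 ≤ k ≤ n`, the sum of all `k × k`
principal minors of `A` is positive. -/
def IsQMatrix {n : ℕ} (A : Matrix (Fin n) (Fin n) ℝ) : Prop :=
  ∀ k : ℕ, 1 ≤ k → k ≤ n →
    0 < ∑ s ∈ Finset.univ.filter (fun s : Finset (Fin n) => s.card = k), principalMinor A s

/-- `A` is a P²-matrix: both `A` and `A²` are P-matrices. -/
def IsP2Matrix {n : ℕ} (A : Matrix (Fin n) (Fin n) ℝ) : Prop :=
  IsPMatrix A ∧ IsPMatrix (A ^ 2)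

lemma principalMinor_empty {n : ℕ} (A : Matrix (Fin n) (Fin n) ℝ) :
    principalMinor A ∅ = 1 := by
  haveI : IsEmpty {x : Fin n // x ∈ (∅ : Finset (Fin n))} :=
    ⟨fun x => absurd x.2 (Finset.notMem_empty _)⟩
  simp [principalMinor]

lemma IsPMatrix.minor_pos {n : ℕ} {A : Matrix (Fin n) (Fin n) ℝ} (hA : IsPMatrix A)
    (s : Finset (Fin n)) : 0 < principalMinor A s := by
  rcases s.eq_empty_or_nonempty with h | h
  · rw [h, principalMinor_empty]; norm_num
  · exact hA s h

lemma principalMinor_univ {n : ℕ} (A : Matrix (Fin n) (Fin n) ℝ) :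
    principalMinor A Finset.univ = A.det := by
  let e : {x : Fin n // x ∈ (Finset.univ : Finset (Fin n))} ≃ Fin n :=
    Equiv.subtypeUnivEquiv (fun x => Finset.mem_univ x)
  have h : A.submatrix (fun i : {x // x ∈ (Finset.univ : Finset (Fin n))} => (i : Fin n))
      (fun j : {x // x ∈ (Finset.univ : Finset (Fin n))} => (j : Fin n)) = A.submatrix e e := by
    ext i j; rfl
  rw [principalMinor, h, Matrix.det_submatrix_equiv_self]

lemma IsPMatrix.det_pos {n : ℕ} {A : Matrix (Fin n) (Fin n) ℝ} (hA : IsPMatrix A) :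
    0 < A.det := by
  rw [← principalMinor_univ]; exact hA.minor_pos _

set_option maxHeartbeats 1000000 in
lemma IsPMatrix.inv {n : ℕ} {A : Matrix (Fin n) (Fin n) ℝ} (hA : IsPMatrix A) :
    IsPMatrix A⁻¹ := by
  intro s _
  classical
  set c : {x // x ∈ s} → Fin n := fun i => (i : Fin n) with hc
  set c' : {x // x ∈ sᶜ} → Fin n := fun i => (i : Fin n) with hc'
  let e : {x // x ∈ s} ⊕ {x // x ∈ sᶜ} ≃ Fin n :=
    (Equiv.sumCongr (Equiv.refl _)
      (Equiv.subtypeEquivRight (fun x => Finset.mem_compl))).trans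
      (Equiv.sumCompl (· ∈ s))
  set B := A.submatrix c c with hB
  set C := A.submatrix c c' with hC
  set D := A.submatrix c' c with hD
  set E := A.submatrix c' c' with hE
  have hM : A.submatrix e e = Matrix.fromBlocks B C D E := by
    ext i j
    cases i <;> cases j <;> rfl
  have hdetE : E.det = principalMinor A sᶜ := rfl
  have hposE : 0 < E.det := by rw [hdetE]; exact hA.minor_pos _
  haveI hEI : Invertible E := E.invertibleOfIsUnitDet (ne_of_gt hposE).isUnit
  have hdetM : (A.submatrix e e).det = A.det := Matrix.det_submatrix_equiv_self e A
  set S := B - C * ⅟E * D with hS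
  have hdetMS : A.det = E.det * S.det := by
    rw [← hdetM, hM]
    exact Matrix.det_fromBlocks₂₂ B C D E
  have hposS : 0 < S.det := by
    have hposA := hA.det_pos
    nlinarith
  haveI hSI : Invertible S := S.invertibleOfIsUnitDet (ne_of_gt hposS).isUnit
  set N := Matrix.fromBlocks (⅟S) (-(⅟S * C * ⅟E)) (-(⅟E * D * ⅟S))
    (⅟E + ⅟E * D * ⅟S * C * ⅟E) with hN
  have hSS : (B - C * ⅟E * D) * ⅟S = 1 := mul_invOf_self S
  have hEE : E * ⅟E = 1 := mul_invOf_self E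
  have hBS : B * ⅟S = 1 + C * ⅟E * D * ⅟S := by
    rw [Matrix.sub_mul] at hSS
    exact eq_add_of_sub_eq hSS
  have hMN : A.submatrix e e * N = 1 := by
    rw [hM, hN, Matrix.fromBlocks_multiply]
    have h11 : B * ⅟S + C * -(⅟E * D * ⅟S) = 1 := by
      simp only [Matrix.mul_neg, Matrix.mul_add, ← Matrix.mul_assoc, hBS, hEE,
        Matrix.add_mul, Matrix.one_mul]
      abel
    have h12 : B * -(⅟S * C * ⅟E) + C * (⅟E + ⅟E * D * ⅟S * C * ⅟E) = 0 := by
      simp only [Matrix.mul_neg, Matrix.mul_add, ← Matrix.mul_assoc, hBS, hEE,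
        Matrix.add_mul, Matrix.one_mul]
      abel
    have h21 : D * ⅟S + E * -(⅟E * D * ⅟S) = 0 := by
      simp only [Matrix.mul_neg, Matrix.mul_add, ← Matrix.mul_assoc, hBS, hEE,
        Matrix.add_mul, Matrix.one_mul]
      abel
    have h22 : D * -(⅟S * C * ⅟E) + E * (⅟E + ⅟E * D * ⅟S * C * ⅟E) = 1 := by
      simp only [Matrix.mul_neg, Matrix.mul_add, ← Matrix.mul_assoc, hBS, hEE,
        Matrix.add_mul, Matrix.one_mul]
      abel
    rw [h11, h12, h21, h22, Matrix.fromBlocks_one]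
  haveI hMI : Invertible (A.submatrix e e) := invertibleOfRightInverse _ _ hMN
  have hinvM : (A.submatrix e e)⁻¹ = N := by
    rw [← invOf_eq_nonsing_inv]; exact invOf_eq_right_inv hMN
  have hinvM' : (A.submatrix e e)⁻¹ = A⁻¹.submatrix e e :=
    Matrix.inv_submatrix_equiv A e e
  have hfinal : A⁻¹.submatrix c c = ⅟S := by
    ext i j
    have := congrFun (congrFun (hinvM'.symm.trans hinvM) (Sum.inl i)) (Sum.inl j)
    exact this
  have : principalMinor A⁻¹ s = (⅟S).det := by
    rw [principalMinor, ← hc]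
    exact congrArg Matrix.det hfinal
  rw [this, invOf_eq_nonsing_inv, Matrix.det_nonsing_inv, Ring.inverse_eq_inv']
  exact inv_pos.mpr hposS

/-- A P²-matrix is invertible and its inverse is a P²-matrix. -/
theorem IsP2Matrix.inv {n : ℕ} (A : Matrix (Fin n) (Fin n) ℝ)
    (hA : IsP2Matrix A) : IsUnit A ∧ IsP2Matrix A⁻¹ := by
  have hdet := hA.1.det_pos
  refine ⟨(A.isUnit_iff_isUnit_det).mpr (ne_of_gt hdet).isUnit, hA.1.inv, ?_⟩
  have hsq : A⁻¹ ^ 2 = (A ^ 2)⁻¹ := by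
    rw [sq, sq, Matrix.mul_inv_rev]
  rw [hsq]
  exact hA.2.inv
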